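/- For H > 0, the Maxwellian M(H,u,ξ) = (1/(gπ))·max(0, 2gH − (ξ−u)²)^{1/2} satisfies the second moment relation ∫_ℝ ξ²·M(H,u,ξ) dξ = H·u² + g·H²/2. -/

import Mathlib

open MeasureTheory Real intervalIntegral

lemma aux_x2 : ∫ x in (-1:ℝ)..1, x^2 * Real.sqrt (1 - x^2) = π/8 := by
  have hcont : Continuous fun x : ℝ => (1 - 4*x^2) * Real.sqrt (1 - x^2) := by fun_prop
  have key : ∫ x in (-1:ℝ)..1, (1 - 4*x^2) * Real.sqrt (1 - x^2) = 0 := by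
    have hF : ∀ x ∈ Set.Ioo (-1:ℝ) 1,
        HasDerivWithinAt (fun x : ℝ => x * (1 - x^2) * Real.sqrt (1 - x^2))
          ((1 - 4*x^2) * Real.sqrt (1 - x^2)) (Set.Ioi x) x := by
      intro x hx
      have hpos : 0 < 1 - x^2 := by nlinarith [hx.1, hx.2]
      have hinner : HasDerivAt (fun x : ℝ => 1 - x^2) (-2*x) x := by
        have h := (hasDerivAt_const x (1:ℝ)).sub (hasDerivAt_pow 2 x)
        exact h.congr_deriv (by simp)
      have hs := (Real.hasDerivAt_sqrt hpos.ne').comp x hinner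
      have hp : HasDerivAt (fun x : ℝ => x * (1 - x^2)) (1 - 3*x^2) x := by
        have h := (hasDerivAt_id x).mul hinner
        exact h.congr_deriv (by simp [id]; ring)
      have hsq : Real.sqrt (1 - x^2) ^ 2 = 1 - x^2 := Real.sq_sqrt hpos.le
      have hspos : 0 < Real.sqrt (1 - x^2) := Real.sqrt_pos.2 hpos
      have hmul := hp.mul hs
      refine HasDerivAt.hasDerivWithinAt ?_
      refine hmul.congr_deriv ?_
      simp only [Function.comp]
      field_simp
      nlinarith [hsq, hspos]
    have := intervalIntegral.integral_eq_sub_of_hasDeriv_right_of_le (by norm_num)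
      (Continuous.continuousOn (by fun_prop)) hF (hcont.intervalIntegrable _ _)
    simpa using this
  have hc1 : Continuous fun x : ℝ => Real.sqrt (1 - x^2) := by fun_prop
  have hc2 : Continuous fun x : ℝ => 4 * (x^2 * Real.sqrt (1 - x^2)) := by fun_prop
  have hsplit : (∫ x in (-1:ℝ)..1, (1 - 4*x^2) * Real.sqrt (1 - x^2)) =
      (∫ x in (-1:ℝ)..1, Real.sqrt (1 - x^2)) - ∫ x in (-1:ℝ)..1, 4 * (x^2 * Real.sqrt (1 - x^2)) := by
    rw [← intervalIntegral.integral_sub (hc1.intervalIntegrable _ _) (hc2.intervalIntegrable _ _)]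
    congr 1; ext x; ring
  rw [hsplit, intervalIntegral.integral_const_mul,
    (by simpa using integral_sqrt_one_sub_sq : (∫ x in (-1:ℝ)..1, Real.sqrt (1 - x^2)) = π/2)] at key
  linarith

theorem stmt2 (g H u : ℝ) (hg : 0 < g) (hH : 0 < H) :
    (∫ ξ : ℝ, ξ ^ 2 * ((1 / (g * Real.pi)) * Real.sqrt (max 0 (2 * g * H - (ξ - u) ^ 2)))) =
      H * u ^ 2 + g * H ^ 2 / 2 := by
  set c := 1 / (g * Real.pi) with hc
  set R := Real.sqrt (2 * g * H) with hRdef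
  have hR2 : R ^ 2 = 2 * g * H := Real.sq_sqrt (by positivity)
  have hR : 0 < R := Real.sqrt_pos.2 (by positivity)
  set φ : ℝ → ℝ := fun x => (x + u) ^ 2 * (c * Real.sqrt (max 0 (R^2 - x^2))) with hφ
  have step1 : (∫ ξ : ℝ, ξ ^ 2 * (c * Real.sqrt (max 0 (2 * g * H - (ξ - u) ^ 2))))
      = ∫ x : ℝ, φ x := by
    rw [← MeasureTheory.integral_sub_right_eq_self φ u]
    congr 1; ext ξ
    simp only [hφ, hR2, sub_add_cancel]
  have hsupp : ∀ x ∉ Set.Ioc (-R) R, φ x = 0 := by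
    intro x hx
    simp only [Set.mem_Ioc, not_and, not_le] at hx
    have hx2 : R^2 - x^2 ≤ 0 := by
      rcases le_or_gt x (-R) with h | h
      · nlinarith
      · have := hx h; nlinarith
    simp [hφ, max_eq_left hx2]
  have step2 : (∫ x : ℝ, φ x) = ∫ x in (-R)..R, φ x := by
    rw [intervalIntegral.integral_of_le (by linarith)]
    exact (setIntegral_eq_integral_of_forall_compl_eq_zero hsupp).symm
  have step3 : (∫ x in (-R)..R, φ x)
      = ∫ x in (-R)..R, (x + u) ^ 2 * (c * Real.sqrt (R^2 - x^2)) := by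
    rw [intervalIntegral.integral_of_le (by linarith),
        intervalIntegral.integral_of_le (by linarith)]
    apply setIntegral_congr_fun measurableSet_Ioc
    intro x hx
    have h0 : (0:ℝ) ≤ R^2 - x^2 := by nlinarith [hx.1, hx.2]
    simp [hφ, max_eq_right h0]
  have hI0 : (∫ x in (-R)..R, Real.sqrt (R^2 - x^2)) = π * R^2 / 2 := by
    have heq : ∀ x : ℝ, Real.sqrt (R^2 - x^2) = R * Real.sqrt (1 - (x/R)^2) := by
      intro x
      rw [show R^2 - x^2 = R^2 * (1 - (x/R)^2) by field_simp,
        Real.sqrt_mul (by positivity), Real.sqrt_sq hR.le]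
    simp_rw [heq]
    rw [intervalIntegral.integral_const_mul,
        intervalIntegral.integral_comp_div (fun y => Real.sqrt (1 - y^2)) hR.ne',
        neg_div, div_self hR.ne']
    simp only [smul_eq_mul]
    rw [(by simpa using integral_sqrt_one_sub_sq : (∫ x in (-1:ℝ)..1, Real.sqrt (1 - x^2)) = π/2)]
    ring
  have hI2 : (∫ x in (-R)..R, x^2 * Real.sqrt (R^2 - x^2)) = π * R^4 / 8 := by
    have heq : ∀ x : ℝ, x^2 * Real.sqrt (R^2 - x^2) = R^3 * ((x/R)^2 * Real.sqrt (1 - (x/R)^2)) := by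
      intro x
      rw [show R^2 - x^2 = R^2 * (1 - (x/R)^2) by field_simp,
        Real.sqrt_mul (by positivity), Real.sqrt_sq hR.le]
      field_simp
    simp_rw [heq]
    rw [intervalIntegral.integral_const_mul,
        intervalIntegral.integral_comp_div (fun y => y^2 * Real.sqrt (1 - y^2)) hR.ne',
        neg_div, div_self hR.ne']
    simp only [smul_eq_mul]
    rw [aux_x2]; ring
  have hI1 : (∫ x in (-R)..R, x * Real.sqrt (R^2 - x^2)) = 0 := by
    have h1 : (∫ x in (-R)..R, (-x) * Real.sqrt (R^2 - (-x)^2)) = ∫ x in (-R)..R, x * Real.sqrt (R^2 - x^2) := by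
      rw [intervalIntegral.integral_comp_neg (fun x => x * Real.sqrt (R^2 - x^2))]
      simp
    have h2 : (∫ x in (-R)..R, (-x) * Real.sqrt (R^2 - (-x)^2)) = - ∫ x in (-R)..R, x * Real.sqrt (R^2 - x^2) := by
      rw [← intervalIntegral.integral_neg]
      congr 1; ext x; rw [neg_pow]; ring_nf
    linarith [h1, h2.symm]
  have hint1 : IntervalIntegrable (fun x:ℝ => x^2 * Real.sqrt (R^2 - x^2)) volume (-R) R :=
    (by fun_prop : Continuous fun x:ℝ => x^2 * Real.sqrt (R^2 - x^2)).intervalIntegrable _ _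
  have hint2 : IntervalIntegrable (fun x:ℝ => (2*u) * (x * Real.sqrt (R^2 - x^2))) volume (-R) R :=
    (by fun_prop : Continuous fun x:ℝ => (2*u) * (x * Real.sqrt (R^2 - x^2))).intervalIntegrable _ _
  have hint3 : IntervalIntegrable (fun x:ℝ => u^2 * Real.sqrt (R^2 - x^2)) volume (-R) R :=
    (by fun_prop : Continuous fun x:ℝ => u^2 * Real.sqrt (R^2 - x^2)).intervalIntegrable _ _
  have hexp : (∫ x in (-R)..R, (x + u) ^ 2 * (c * Real.sqrt (R^2 - x^2)))
      = c * (π * R^4 / 8 + ((2*u) * 0 + u^2 * (π * R^2 / 2))) := by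
    have heq : ∀ x : ℝ, (x + u) ^ 2 * (c * Real.sqrt (R^2 - x^2))
        = c * (x^2 * Real.sqrt (R^2 - x^2)
          + ((2*u) * (x * Real.sqrt (R^2 - x^2)) + u^2 * Real.sqrt (R^2 - x^2))) := by
      intro x; ring
    simp_rw [heq]
    rw [intervalIntegral.integral_const_mul,
        intervalIntegral.integral_add hint1 (hint2.add hint3),
        intervalIntegral.integral_add hint2 hint3,
        intervalIntegral.integral_const_mul, intervalIntegral.integral_const_mul,
        hI0, hI1, hI2]
  rw [step1, step2, step3, hexp, hc]
  have hR4 : R^4 = (2*g*H)^2 := by rw [show R^4 = (R^2)^2 by ring, hR2]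
  rw [hR4, hR2]
  have hπ : Real.pi ≠ 0 := Real.pi_ne_zero
  field_simp
  ring
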